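/- arXiv:1010.0076 — 6 statements merged into one kernel-verified Lean document; each statement's English description precedes it below -/
import Mathlib

section
/- Let A be a von Neumann algebra on a Z/2-graded Hilbert space H, graded by τ(x) = uxu where u is the grading unitary (so uAu = A). Then the supercommutant A^♮ equals κ A' κ*, where A' is the ordinary commutant and κ the Klein transformation. In particular A^♮ is unitarily equivalent to A'. -/
set_option maxHeartbeats 1000000

open ContinuousLinearMap

variable {H : Type*} [NormedAddCommGroup H] [InnerProductSpace ℂ H] [CompleteSpace H]

/-- Even part of a bounded operator with respect to the grading unitary `u`. -/
noncomputable def evenPart (u x : H →L[ℂ] H) : H →L[ℂ] H := (2⁻¹ : ℂ) • (x + u * x * u)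

/-- Odd part of a bounded operator with respect to the grading unitary `u`. -/
noncomputable def oddPart (u x : H →L[ℂ] H) : H →L[ℂ] H := (2⁻¹ : ℂ) • (x - u * x * u)

/-- Supercommutator `[x,y]_τ = [x₀,y₀] + [x₀,y₁] + [x₁,y₀] + [x₁,y₁]₊`. -/
noncomputable def superComm (u x y : H →L[ℂ] H) : H →L[ℂ] H :=
  (evenPart u x * evenPart u y - evenPart u y * evenPart u x) +
  (evenPart u x * oddPart u y - oddPart u y * evenPart u x) +
  (oddPart u x * evenPart u y - evenPart u y * oddPart u x) +
  (oddPart u x * oddPart u y + oddPart u y * oddPart u x)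

/-- Supercommutant of a set of bounded operators. -/
noncomputable def superCommutant (u : H →L[ℂ] H) (S : Set (H →L[ℂ] H)) :
    Set (H →L[ℂ] H) := {b | ∀ a ∈ S, superComm u a b = 0}

/-- Klein transformation in terms of the grading unitary. -/
noncomputable def kl (u : H →L[ℂ] H) : H →L[ℂ] H :=
  ((1 + Complex.I) * 2⁻¹) • 1 + ((1 - Complex.I) * 2⁻¹) • u

noncomputable def kl' (u : H →L[ℂ] H) : H →L[ℂ] H :=
  ((1 - Complex.I) * 2⁻¹) • 1 + ((1 + Complex.I) * 2⁻¹) • u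

lemma kl_mul_kl' (u : H →L[ℂ] H) (hu2 : u * u = 1) : kl u * kl' u = 1 := by
  simp only [kl, kl', add_mul, mul_add, smul_mul_assoc, mul_smul_comm, smul_smul,
    one_mul, mul_one, hu2]
  match_scalars <;> (try ring_nf) <;> (try simp [Complex.I_sq]) <;> (try ring_nf) <;> (try norm_num)

lemma kl'_mul_kl (u : H →L[ℂ] H) (hu2 : u * u = 1) : kl' u * kl u = 1 := by
  simp only [kl, kl', add_mul, mul_add, smul_mul_assoc, mul_smul_comm, smul_smul,
    one_mul, mul_one, hu2]
  match_scalars <;> (try ring_nf) <;> (try simp [Complex.I_sq]) <;> (try ring_nf) <;> (try norm_num)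

lemma identA (u x y : H →L[ℂ] H) (hu2 : u * u = 1) :
    x * (kl' u * y * kl u) - (kl' u * y * kl u) * x
      = (2⁻¹ : ℂ) • (superComm u x y + u * superComm u (u * x * u) y * u)
        - (Complex.I * 2⁻¹) • ((superComm u x y - u * superComm u (u * x * u) y * u) * u) := by
  have hu2l : ∀ z : H →L[ℂ] H, u * (u * z) = z := fun z => by
    rw [← mul_assoc, hu2, one_mul]
  simp only [kl, kl', superComm, evenPart, oddPart, mul_add, add_mul, mul_sub, sub_mul,
    smul_mul_assoc, mul_smul_comm, smul_add, smul_sub, smul_smul, mul_assoc, one_mul,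
    mul_one, hu2l, hu2]
  match_scalars <;> (try ring_nf) <;> (try simp [Complex.I_sq]) <;> (try ring_nf) <;> (try norm_num)

lemma identB (u x c : H →L[ℂ] H) (hu2 : u * u = 1) :
    superComm u x (kl u * c * kl' u)
      = (2⁻¹ : ℂ) • ((x * c - c * x) + u * ((u * x * u) * c - c * (u * x * u)) * u)
        + (Complex.I * 2⁻¹) • (((x * c - c * x) - u * ((u * x * u) * c - c * (u * x * u)) * u) * u) := by
  have hu2l : ∀ z : H →L[ℂ] H, u * (u * z) = z := fun z => by
    rw [← mul_assoc, hu2, one_mul]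
  simp only [kl, kl', superComm, evenPart, oddPart, mul_add, add_mul, mul_sub, sub_mul,
    smul_mul_assoc, mul_smul_comm, smul_add, smul_sub, smul_smul, mul_assoc, one_mul,
    mul_one, hu2l, hu2]
  match_scalars <;> (try ring_nf) <;> (try simp [Complex.I_sq]) <;> (try ring_nf) <;> (try norm_num)

/-- For a von Neumann algebra `A` on a ℤ/2-graded Hilbert space, graded
by `τ(x) = uxu`, the supercommutant `A^♮` equals `κ A' κ*`, where `A'` is the ordinary
commutant and `κ` the Klein transformation; in particular `A^♮` is unitarily
equivalent to `A'`. -/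
theorem superCommutant_eq_klein_conj_commutant
    (p₀ p₁ : H →L[ℂ] H)
    (h₀ : IsIdempotentElem p₀) (h₁ : IsIdempotentElem p₁)
    (h₀sa : IsSelfAdjoint p₀) (h₁sa : IsSelfAdjoint p₁)
    (horth : p₀ * p₁ = 0) (hsum : p₀ + p₁ = 1)
    (u κ : H →L[ℂ] H)
    (hu : u = p₀ - p₁) (hκ : κ = p₀ + Complex.I • p₁)
    (A : VonNeumannAlgebra H)
    (hgraded : ∀ a ∈ (A : Set (H →L[ℂ] H)), u * a * u ∈ (A : Set (H →L[ℂ] H))) :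
    superCommutant u (A : Set (H →L[ℂ] H)) =
      (fun y => κ * y * ContinuousLinearMap.adjoint κ) ''
        (A.commutant : Set (H →L[ℂ] H)) := by
  have hp1 : p₁ = 1 - p₀ := by rw [← hsum]; abel
  have hp10 : p₁ * p₀ = 0 := by
    have := congrArg star horth
    simpa [star_mul, h₀sa.star_eq, h₁sa.star_eq] using this
  have hu2 : u * u = 1 := by
    have expand : (p₀ - p₁) * (p₀ - p₁) = p₀ * p₀ - p₀ * p₁ - p₁ * p₀ + p₁ * p₁ := by
      noncomm_ring
    rw [hu, expand, h₀.eq, h₁.eq, horth, hp10]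
    simpa using hsum
  have hκu : κ = kl u := by
    rw [hκ, kl, hu, hp1]
    match_scalars <;> ring
  have hadj : ContinuousLinearMap.adjoint κ = p₀ - Complex.I • p₁ := by
    rw [← ContinuousLinearMap.star_eq_adjoint, hκ, star_add, star_smul,
      h₀sa.star_eq, h₁sa.star_eq, Complex.star_def, Complex.conj_I, neg_smul]
    abel
  have hκ'u : ContinuousLinearMap.adjoint κ = kl' u := by
    rw [hadj, kl', hu, hp1]
    match_scalars <;> ring
  have hkk' : κ * ContinuousLinearMap.adjoint κ = 1 := by
    rw [hκ'u, hκu]; exact kl_mul_kl' u hu2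
  ext b
  simp only [superCommutant, Set.mem_setOf_eq, Set.mem_image]
  constructor
  · intro hb
    refine ⟨ContinuousLinearMap.adjoint κ * b * κ, ?_, ?_⟩
    · rw [SetLike.mem_coe, VonNeumannAlgebra.mem_commutant_iff]
      intro g hg
      have hg' : g ∈ (A : Set (H →L[ℂ] H)) := hg
      have h1 : superComm u g b = 0 := hb g hg'
      have h2 : superComm u (u * g * u) b = 0 := hb _ (hgraded g hg')
      have key := identA u g b hu2
      rw [h1, h2] at key
      simp only [mul_zero, zero_mul, add_zero, smul_zero, sub_zero, zero_sub, sub_self,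
        neg_zero, smul_neg] at key
      rw [hκ'u, hκu]
      exact sub_eq_zero.mp key
    · rw [mul_assoc, mul_assoc, mul_assoc, hkk', mul_one, ← mul_assoc, hkk', one_mul]
  · rintro ⟨c, hc, rfl⟩
    intro a ha
    have hc' : ∀ g ∈ A, g * c = c * g :=
      VonNeumannAlgebra.mem_commutant_iff.mp (SetLike.mem_coe.mp hc)
    have h1 : a * c - c * a = 0 := sub_eq_zero.mpr (hc' a ha)
    have h2 : (u * a * u) * c - c * (u * a * u) = 0 :=
      sub_eq_zero.mpr (hc' _ (hgraded a ha))
    show superComm u a (κ * c * ContinuousLinearMap.adjoint κ) = 0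
    rw [hκ'u, hκu, identB u a c hu2, h1, h2]
    simp
end

section
/- Let A be a von Neumann algebra on a Z/2-graded Hilbert space, graded by τ (i.e., uAu = A for the grading unitary u). Then the double supercommutant satisfies A^♮♮ = A. -/
set_option linter.unusedSectionVars false
set_option linter.unreachableTactic false
set_option linter.unusedTactic false


open ContinuousLinearMap

variable {H : Type*} [NormedAddCommGroup H] [InnerProductSpace ℂ H] [CompleteSpace H]

noncomputable def klein (u : H →L[ℂ] H) : H →L[ℂ] H :=
  ((1 + Complex.I)/2) • 1 + ((1 - Complex.I)/2) • u
noncomputable def klein' (u : H →L[ℂ] H) : H →L[ℂ] H :=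
  ((1 - Complex.I)/2) • 1 + ((1 + Complex.I)/2) • u

section basics
variable {u : H →L[ℂ] H} (huu : u * u = 1)

lemma even_add_odd (x : H →L[ℂ] H) : evenPart u x + oddPart u x = x := by
  simp only [evenPart, oddPart, ← smul_add]
  rw [show (x + u * x * u) + (x - u * x * u) = (2:ℂ) • x by rw [two_smul]; abel]
  rw [smul_smul]; norm_num

lemma add_eq_zero_split {x y : H →L[ℂ] H} (h1 : x + y = 0) (h2 : x - y = 0) :
    x = 0 ∧ y = 0 := by
  have hy : x = y := sub_eq_zero.mp h2
  subst hy
  have : (2:ℂ) • x = 0 := by rw [two_smul ℂ x]; exact h1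
  have hx : x = 0 := by
    rcases smul_eq_zero.mp this with h | h
    · norm_num at h
    · exact h
  exact ⟨hx, hx⟩

include huu

lemma uu_cancel (y : H →L[ℂ] H) : u * (u * y) = y := by
  rw [← mul_assoc, huu, one_mul]

lemma u_even_comm (x : H →L[ℂ] H) : u * evenPart u x = evenPart u x * u := by
  simp only [evenPart, mul_smul_comm, smul_mul_assoc]
  congr 1
  simp only [mul_add, add_mul, mul_assoc, uu_cancel huu]
  rw [huu, mul_one, add_comm]

lemma u_odd_anticomm (x : H →L[ℂ] H) : u * oddPart u x = -(oddPart u x * u) := by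
  simp only [oddPart, mul_smul_comm, smul_mul_assoc, ← smul_neg]
  congr 1
  simp only [mul_sub, sub_mul, mul_assoc, neg_sub, uu_cancel huu]
  rw [huu, mul_one]

lemma evenPart_conj (x : H →L[ℂ] H) : evenPart u (u * x * u) = evenPart u x := by
  simp only [evenPart]
  congr 1
  rw [show u * (u * x * u) * u = u * u * x * (u * u) by simp only [mul_assoc], huu]
  simp [add_comm]

lemma oddPart_conj (x : H →L[ℂ] H) : oddPart u (u * x * u) = -oddPart u x := by
  simp only [oddPart, ← smul_neg]
  congr 1
  rw [show u * (u * x * u) * u = u * u * x * (u * u) by simp only [mul_assoc], huu]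
  simp

lemma klein_mul_klein' : klein u * klein' u = 1 := by
  simp only [klein, klein', add_mul, mul_add, smul_mul_assoc, mul_smul_comm, one_mul, mul_one,
    smul_smul, huu]
  match_scalars <;>
    first | linear_combination (-(1:ℂ)/2) * Complex.I_sq | linear_combination ((1:ℂ)/2) * Complex.I_sq

lemma klein'_mul_klein : klein' u * klein u = 1 := by
  simp only [klein, klein', add_mul, mul_add, smul_mul_assoc, mul_smul_comm, one_mul, mul_one,
    smul_smul, huu]
  match_scalars <;>
    first | linear_combination (-(1:ℂ)/2) * Complex.I_sq | linear_combination ((1:ℂ)/2) * Complex.I_sq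

lemma klein_mul_klein : klein u * klein u = u := by
  simp only [klein, add_mul, mul_add, smul_mul_assoc, mul_smul_comm, one_mul, mul_one,
    smul_smul, huu]
  match_scalars <;>
    first | linear_combination (-(1:ℂ)/2) * Complex.I_sq | linear_combination ((1:ℂ)/2) * Complex.I_sq

lemma klein'_mul_klein' : klein' u * klein' u = u := by
  simp only [klein', add_mul, mul_add, smul_mul_assoc, mul_smul_comm, one_mul, mul_one,
    smul_smul, huu]
  match_scalars <;>
    first | linear_combination (-(1:ℂ)/2) * Complex.I_sq | linear_combination ((1:ℂ)/2) * Complex.I_sq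

lemma kk'_cancel (w : H →L[ℂ] H) : klein u * (klein' u * w) = w := by
  rw [← mul_assoc, klein_mul_klein' huu, one_mul]

lemma k'k_cancel (w : H →L[ℂ] H) : klein' u * (klein u * w) = w := by
  rw [← mul_assoc, klein'_mul_klein huu, one_mul]

-- parity product lemmas
lemma mul_cc {x z : H →L[ℂ] H} (hx : u * x = x * u) (hz : u * z = z * u) :
    u * (x * z) = (x * z) * u := by
  rw [← mul_assoc, hx, mul_assoc, hz, ← mul_assoc]

lemma mul_ca {x w : H →L[ℂ] H} (hx : u * x = x * u) (hw : u * w = -(w * u)) :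
    u * (x * w) = -((x * w) * u) := by
  rw [← mul_assoc, hx, mul_assoc, hw, mul_neg, ← mul_assoc]

lemma mul_ac {y z : H →L[ℂ] H} (hy : u * y = -(y * u)) (hz : u * z = z * u) :
    u * (y * z) = -((y * z) * u) := by
  rw [← mul_assoc, hy, neg_mul, mul_assoc, hz, ← mul_assoc]

lemma mul_aa {y w : H →L[ℂ] H} (hy : u * y = -(y * u)) (hw : u * w = -(w * u)) :
    u * (y * w) = (y * w) * u := by
  rw [← mul_assoc, hy, neg_mul, mul_assoc, hw, mul_neg, neg_neg, ← mul_assoc]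

lemma parity_split {P Q : H →L[ℂ] H} (hP : u * P = P * u) (hQ : u * Q = -(Q * u))
    (h : P + Q = 0) : P = 0 ∧ Q = 0 := by
  have h2 : P - Q = 0 := by
    have hc := congrArg (fun t => u * t * u) h
    simp only [mul_zero, zero_mul] at hc
    rw [mul_add, add_mul, hP, hQ, neg_mul, mul_assoc, mul_assoc, huu, mul_one, mul_one] at hc
    rwa [← sub_eq_add_neg] at hc
  exact add_eq_zero_split h h2

lemma klein_comm {z : H →L[ℂ] H} (hz : u * z = z * u) : klein u * z = z * klein u := by
  simp only [klein, add_mul, mul_add, smul_mul_assoc, mul_smul_comm, one_mul, mul_one, hz]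

lemma klein_conj_even (b : H →L[ℂ] H) :
    klein u * evenPart u b * klein' u = evenPart u b := by
  rw [klein_comm huu (u_even_comm huu b), mul_assoc, klein_mul_klein' huu, mul_one]

lemma klein_conj_odd' {w : H →L[ℂ] H} (hw : u * w = -(w * u)) :
    klein u * w * klein' u = Complex.I • (w * u) := by
  have hwu : u * (w * u) = -w := by
    rw [← mul_assoc, hw, neg_mul, mul_assoc, huu, mul_one]
  simp only [klein, klein', add_mul, mul_add, smul_mul_assoc, mul_smul_comm, one_mul, mul_one,
    smul_smul, mul_assoc, hw, hwu, smul_neg, neg_mul, neg_smul, huu]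
  match_scalars <;>
    first
    | ring
    | linear_combination (-(1:ℂ)/2) * Complex.I_sq
    | linear_combination ((1:ℂ)/2) * Complex.I_sq
    | linear_combination (-(1:ℂ)/4) * Complex.I_sq
    | linear_combination ((1:ℂ)/4) * Complex.I_sq

lemma klein_conj_odd (b : H →L[ℂ] H) :
    klein u * oddPart u b * klein' u = Complex.I • (oddPart u b * u) :=
  klein_conj_odd' huu (u_odd_anticomm huu b)

lemma klein_conj (b : H →L[ℂ] H) :
    klein u * b * klein' u = evenPart u b + Complex.I • (oddPart u b * u) := by
  conv_lhs => rw [← even_add_odd (u := u) b]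
  rw [mul_add, add_mul, klein_conj_even huu, klein_conj_odd huu]

/-- Key formula for the commutator with the Klein conjugate. -/
lemma comm_klein_conj (a b : H →L[ℂ] H) :
    a * (klein u * b * klein' u) - (klein u * b * klein' u) * a =
      ((evenPart u a * evenPart u b - evenPart u b * evenPart u a) +
        (oddPart u a * evenPart u b - evenPart u b * oddPart u a)) +
      Complex.I • (((evenPart u a * oddPart u b - oddPart u b * evenPart u a) +
        (oddPart u a * oddPart u b + oddPart u b * oddPart u a)) * u) := by
  rw [klein_conj huu b]
  conv_lhs => rw [← even_add_odd (u := u) a]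
  set x := evenPart u a
  set y := oddPart u a
  set z := evenPart u b
  set w := oddPart u b
  have hx : u * x = x * u := u_even_comm huu a
  have hy : u * y = -(y * u) := u_odd_anticomm huu a
  have hw : u * w = -(w * u) := u_odd_anticomm huu b
  have h1 : w * u * x = w * x * u := by rw [mul_assoc, hx, ← mul_assoc]
  have h2 : w * u * y = -(w * y * u) := by rw [mul_assoc, hy, mul_neg, ← mul_assoc]
  simp only [mul_add, add_mul, sub_mul, mul_smul_comm, smul_mul_assoc, smul_add, smul_sub,
    ← mul_assoc, h1, h2, smul_neg]
  abel

section C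
variable (a b : H →L[ℂ] H)

-- Abbreviations for the four homogeneous brackets.
local notation "x" => evenPart u a
local notation "y" => oddPart u a
local notation "z" => evenPart u b
local notation "w" => oddPart u b
local notation "C00" => x * z - z * x
local notation "C01" => x * w - w * x
local notation "C10" => y * z - z * y
local notation "C11" => y * w + w * y

lemma superComm_eq : superComm u a b = (C00 + C01) + (C10 + C11) := by
  simp only [superComm]; abel

lemma superComm_conj_left :
    superComm u (u * a * u) b = (C00 + C01) - (C10 + C11) := by
  simp only [superComm, evenPart_conj huu, oddPart_conj huu, neg_mul, mul_neg, neg_neg]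
  abel

lemma comm_klein_conj_sum :
    a * (klein u * b * klein' u) - (klein u * b * klein' u) * a =
      (C00 + Complex.I • (C01 * u)) + (C10 + Complex.I • (C11 * u)) := by
  rw [comm_klein_conj huu a b]
  simp only [add_mul, sub_mul, smul_add, smul_sub]
  abel

lemma comm_klein_conj_diff :
    (u * a * u) * (klein u * b * klein' u) - (klein u * b * klein' u) * (u * a * u) =
      (C00 + Complex.I • (C01 * u)) - (C10 + Complex.I • (C11 * u)) := by
  rw [comm_klein_conj huu (u * a * u) b]
  simp only [evenPart_conj huu, oddPart_conj huu, neg_mul, mul_neg, neg_neg, add_mul, sub_mul,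
    smul_add, smul_sub, smul_neg]
  abel

-- parity commutation facts for the brackets
lemma C00_comm : u * (C00) = (C00) * u := by
  rw [mul_sub, sub_mul, mul_cc huu (u_even_comm huu a) (u_even_comm huu b),
    mul_cc huu (u_even_comm huu b) (u_even_comm huu a)]

lemma C11_comm : u * (C11) = (C11) * u := by
  rw [mul_add, add_mul, mul_aa huu (u_odd_anticomm huu a) (u_odd_anticomm huu b),
    mul_aa huu (u_odd_anticomm huu b) (u_odd_anticomm huu a)]

lemma C01_anticomm : u * (C01) = -((C01) * u) := by
  rw [mul_sub, sub_mul, mul_ca huu (u_even_comm huu a) (u_odd_anticomm huu b),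
    mul_ac huu (u_odd_anticomm huu b) (u_even_comm huu a)]
  abel

lemma C10_anticomm : u * (C10) = -((C10) * u) := by
  rw [mul_sub, sub_mul, mul_ac huu (u_odd_anticomm huu a) (u_even_comm huu b),
    mul_ca huu (u_even_comm huu b) (u_odd_anticomm huu a)]
  abel

lemma smul_u_anticomm {Q : H →L[ℂ] H} (hQ : u * Q = -(Q * u)) :
    u * (Complex.I • (Q * u)) = -((Complex.I • (Q * u)) * u) := by
  rw [mul_smul_comm, smul_mul_assoc, ← mul_assoc, hQ, neg_mul, smul_neg]

lemma smul_u_comm {Q : H →L[ℂ] H} (hQ : u * Q = Q * u) :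
    u * (Complex.I • (Q * u)) = (Complex.I • (Q * u)) * u := by
  rw [mul_smul_comm, smul_mul_assoc, ← mul_assoc, hQ]

lemma smul_u_eq_zero {Q : H →L[ℂ] H} (h : Complex.I • (Q * u) = 0) : Q = 0 := by
  have h1 : Q * u = 0 := by
    rcases smul_eq_zero.mp h with h' | h'
    · exact absurd h' Complex.I_ne_zero
    · exact h'
  have := congrArg (fun t => t * u) h1
  simpa [mul_assoc, huu] using this

/-- The fundamental pairwise equivalences. -/
lemma superComm_pair_iff :
    (superComm u a b = 0 ∧ superComm u (u * a * u) b = 0) ↔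
      (C00 = 0 ∧ C01 = 0 ∧ C10 = 0 ∧ C11 = 0) := by
  constructor
  · rintro ⟨h1, h2⟩
    rw [superComm_eq huu] at h1
    rw [superComm_conj_left huu] at h2
    obtain ⟨hE, hO⟩ := add_eq_zero_split h1 h2
    obtain ⟨h00, h01⟩ := parity_split huu (C00_comm huu a b) (C01_anticomm huu a b) hE
    have hO' : (C11) + (C10) = 0 := by rw [← hO]; abel
    obtain ⟨h11, h10⟩ := parity_split huu (C11_comm huu a b) (C10_anticomm huu a b) hO'
    exact ⟨h00, h01, h10, h11⟩
  · rintro ⟨h00, h01, h10, h11⟩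
    constructor
    · rw [superComm_eq huu, h00, h01, h10, h11]; simp
    · rw [superComm_conj_left huu, h00, h01, h10, h11]; simp

lemma comm_pair_iff :
    (a * (klein u * b * klein' u) - (klein u * b * klein' u) * a = 0 ∧
      (u * a * u) * (klein u * b * klein' u) - (klein u * b * klein' u) * (u * a * u) = 0) ↔
      (C00 = 0 ∧ C01 = 0 ∧ C10 = 0 ∧ C11 = 0) := by
  constructor
  · rintro ⟨h1, h2⟩
    rw [comm_klein_conj_sum huu] at h1
    rw [comm_klein_conj_diff huu] at h2
    obtain ⟨hX, hY⟩ := add_eq_zero_split h1 h2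
    obtain ⟨h00, h01s⟩ := parity_split huu (C00_comm huu a b)
      (smul_u_anticomm huu (C01_anticomm huu a b)) hX
    have hY' : (Complex.I • ((C11) * u)) + (C10) = 0 := by rw [← hY]; abel
    obtain ⟨h11s, h10⟩ := parity_split huu (smul_u_comm huu (C11_comm huu a b))
      (C10_anticomm huu a b) hY'
    exact ⟨h00, smul_u_eq_zero huu h01s, h10, smul_u_eq_zero huu h11s⟩
  · rintro ⟨h00, h01, h10, h11⟩
    constructor
    · rw [comm_klein_conj_sum huu, h00, h01, h10, h11]; simp
    · rw [comm_klein_conj_diff huu, h00, h01, h10, h11]; simp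

end C

section sets
variable {S : Set (H →L[ℂ] H)} (hS : ∀ a ∈ S, u * a * u ∈ S)
include hS

lemma mem_superCommutant_iff (b : H →L[ℂ] H) :
    b ∈ superCommutant u S ↔ klein u * b * klein' u ∈ Set.centralizer S := by
  constructor
  · intro hb
    rw [Set.mem_centralizer_iff]
    intro a ha
    have h4 := (superComm_pair_iff huu a b).mp ⟨hb a ha, hb _ (hS a ha)⟩
    exact sub_eq_zero.mp ((comm_pair_iff huu a b).mpr h4).1
  · intro hb a ha
    have h1 : a * (klein u * b * klein' u) - (klein u * b * klein' u) * a = 0 :=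
      sub_eq_zero.mpr (Set.mem_centralizer_iff.mp hb a ha)
    have h2 : (u * a * u) * (klein u * b * klein' u) -
        (klein u * b * klein' u) * (u * a * u) = 0 :=
      sub_eq_zero.mpr (Set.mem_centralizer_iff.mp hb _ (hS a ha))
    exact ((superComm_pair_iff huu a b).mpr ((comm_pair_iff huu a b).mp ⟨h1, h2⟩)).1

lemma superCommutant_graded :
    ∀ b ∈ superCommutant u S, u * b * u ∈ superCommutant u S := by
  intro b hb a ha
  obtain ⟨h00, h01, h10, h11⟩ := (superComm_pair_iff huu a b).mp ⟨hb a ha, hb _ (hS a ha)⟩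
  have hc : superComm u a (u * b * u) =
      ((evenPart u a * evenPart u b - evenPart u b * evenPart u a) -
        (evenPart u a * oddPart u b - oddPart u b * evenPart u a)) +
      ((oddPart u a * evenPart u b - evenPart u b * oddPart u a) -
        (oddPart u a * oddPart u b + oddPart u b * oddPart u a)) := by
    simp only [superComm, evenPart_conj huu, oddPart_conj huu, neg_mul, mul_neg, neg_neg]
    abel
  rw [hc, h00, h01, h10, h11]; simp

lemma centralizer_superCommutant :
    Set.centralizer (superCommutant u S) =
      {z | klein u * z * klein' u ∈ Set.centralizer (Set.centralizer S)} := by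
  ext z
  simp only [Set.mem_setOf_eq]
  constructor
  · intro hz
    rw [Set.mem_centralizer_iff]
    intro x hx
    have hb : klein' u * x * klein u ∈ superCommutant u S := by
      rw [mem_superCommutant_iff huu hS]
      have hxx : klein u * (klein' u * x * klein u) * klein' u = x := by
        simp only [mul_assoc, kk'_cancel huu]
        rw [klein_mul_klein' huu, mul_one]
      rw [hxx]; exact hx
    have h := Set.mem_centralizer_iff.mp hz _ hb
    have h2 := congrArg (fun t => klein u * t * klein' u) h
    simp only [mul_assoc, kk'_cancel huu, klein_mul_klein' huu, mul_one] at h2 ⊢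
    exact h2
  · intro hz
    rw [Set.mem_centralizer_iff]
    intro b hb
    have hx := (mem_superCommutant_iff huu hS b).mp hb
    have h := Set.mem_centralizer_iff.mp hz _ hx
    have h2 := congrArg (fun t => klein' u * t * klein u) h
    simp only [mul_assoc, k'k_cancel huu, klein'_mul_klein huu, mul_one] at h2 ⊢
    exact h2

end sets

end basics

/-- For a ℤ/2-graded von Neumann algebra `A` (i.e. `uAu = A`), the
double supercommutant satisfies `A^♮♮ = A`. -/
theorem superCommutant_superCommutant
    (p₀ p₁ : H →L[ℂ] H)
    (h₀ : IsIdempotentElem p₀) (h₁ : IsIdempotentElem p₁)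
    (h₀sa : IsSelfAdjoint p₀) (h₁sa : IsSelfAdjoint p₁)
    (horth : p₀ * p₁ = 0) (hsum : p₀ + p₁ = 1)
    (u : H →L[ℂ] H) (hu : u = p₀ - p₁)
    (A : VonNeumannAlgebra H)
    (hgraded : ∀ a ∈ (A : Set (H →L[ℂ] H)), u * a * u ∈ (A : Set (H →L[ℂ] H))) :
    superCommutant u (superCommutant u (A : Set (H →L[ℂ] H))) =
      (A : Set (H →L[ℂ] H)) := by
  have h10 : p₁ * p₀ = 0 := by
    have hst := congrArg star horth
    rwa [star_mul, h₀sa.star_eq, h₁sa.star_eq, star_zero] at hst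
  have huu : u * u = 1 := by
    rw [hu]
    have expand : (p₀ - p₁) * (p₀ - p₁) = p₀ * p₀ - p₀ * p₁ - p₁ * p₀ + p₁ * p₁ := by
      noncomm_ring
    rw [expand, h₀.eq, h₁.eq, horth, h10, sub_zero, sub_zero, hsum]
  ext c
  rw [(show ∀ (s : Set (H →L[ℂ] H)) (a : H →L[ℂ] H), a ∈ s ↔ s a from fun _ _ => Iff.rfl), show (superCommutant u (superCommutant u (A : Set (H →L[ℂ] H)))) c =
    (c ∈ superCommutant u (superCommutant u (A : Set (H →L[ℂ] H)))) from rfl]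
  rw [mem_superCommutant_iff huu (superCommutant_graded huu hgraded) c]
  rw [centralizer_superCommutant huu hgraded]
  simp only [Set.mem_setOf_eq]
  have hkey : klein u * (klein u * c * klein' u) * klein' u = u * c * u := by
    simp only [mul_assoc]
    rw [klein'_mul_klein' huu, ← mul_assoc (klein u), klein_mul_klein huu]
  rw [hkey, A.centralizer_centralizer]
  constructor
  · intro h
    have h2 := hgraded _ h
    have : u * (u * c * u) * u = c := by
      simp only [mul_assoc]
      rw [huu, mul_one, uu_cancel huu]
    rwa [this] at h2
  · exact hgraded c
end

section
/- For s ∈ ℝ, define the Sobolev norm ‖ξ‖_(s) = ‖(I + L₀)^s ξ‖ on finite-energy vectors of a positive-energy representation of the Neveu-Schwarz algebra. Then there is a constant k > 0 (depending on s) with ‖G_r ξ‖_(s) ≤ k (1 + |r|)^{|s| + 1/2} ‖ξ‖_(s + 1/2) for all finite-energy vectors ξ and all r ∈ ℤ + 1/2. -/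
open scoped InnerProductSpace

lemma ns_pythagoras {V : Type*} [NormedAddCommGroup V] [InnerProductSpace ℂ V]
    {ι : Type*} (t : Finset ι) (f : ι → V)
    (h : ∀ i ∈ t, ∀ j ∈ t, i ≠ j → ⟪f i, f j⟫_ℂ = 0) :
    ‖∑ i ∈ t, f i‖ ^ 2 = ∑ i ∈ t, ‖f i‖ ^ 2 := by
  have key : ⟪∑ i ∈ t, f i, ∑ j ∈ t, f j⟫_ℂ = ∑ i ∈ t, ⟪f i, f i⟫_ℂ := by
    rw [sum_inner]
    refine Finset.sum_congr rfl fun i hi => ?_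
    rw [inner_sum, Finset.sum_eq_single_of_mem i hi]
    intro j hj hji
    exact h i hi j hj (fun e => hji e.symm)
  simp only [inner_self_eq_norm_sq_to_K (𝕜 := ℂ)] at key
  exact_mod_cast key

lemma ns_rpow_bound {a b c s : ℝ} (ha : 1 ≤ a) (hb : 1 ≤ b) (hc : 1 ≤ c)
    (h1 : a ≤ b * c) (h2 : b ≤ a * c) : a ^ s ≤ c ^ |s| * b ^ s := by
  rcases le_or_gt 0 s with hs | hs
  · rw [abs_of_nonneg hs]
    calc a ^ s ≤ (b * c) ^ s := Real.rpow_le_rpow (by linarith) h1 hs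
      _ = c ^ s * b ^ s := by
          rw [Real.mul_rpow (by linarith) (by linarith)]; ring
  · rw [abs_of_neg hs]
    have hbc : b / c ≤ a := (div_le_iff₀ (by linarith)).2 h2
    calc a ^ s ≤ (b / c) ^ s :=
          Real.rpow_le_rpow_of_nonpos (by positivity) hbc hs.le
      _ = b ^ s / c ^ s :=
          Real.div_rpow (by linarith : (0:ℝ) ≤ b) (by linarith : (0:ℝ) ≤ c) s
      _ = c ^ (-s) * b ^ s := by
          rw [Real.rpow_neg (by linarith)]; ring


/-- Sobolev estimate for the odd generators of the Neveu-Schwarz algebra.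
`V` is the space of finite-energy vectors of a unitary positive-energy representation:
every vector is a finite sum of mutually orthogonal `L₀`-eigenvectors with eigenvalues
in `½ℕ`; `G r` are the odd generators with `G_r* = G_{-r}`, `2L₀ = G_rG_{-r}+G_{-r}G_r`
and `[L₀, G_r] = -r G_r`; `T s` is the operator `(I + L₀)^s` (acting on an eigenvector
of eigenvalue `μ` as multiplication by `(1+μ)^s`), so the Sobolev norm is
`‖ξ‖_(s) = ‖T s ξ‖`. Then for each `s ∈ ℝ` there is `k > 0` with
`‖G_r ξ‖_(s) ≤ k (1+|r|)^(|s|+1/2) ‖ξ‖_(s+1/2)` for all `ξ` and all `r ∈ ℤ + ½`. -/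
theorem neveu_schwarz_sobolev_estimate
    {V : Type*} [NormedAddCommGroup V] [InnerProductSpace ℂ V]
    (L₀ : V →ₗ[ℂ] V) (G : ℝ → V →ₗ[ℂ] V) (T : ℝ → V →ₗ[ℂ] V)
    (hT : ∀ (s μ : ℝ) (ξ : V), L₀ ξ = (μ : ℂ) • ξ → T s ξ = ((1 + μ) ^ s : ℝ) • ξ)
    (hdiag : ∀ ξ : V, ∃ (n : ℕ) (c : Fin n → V) (μ : Fin n → ℝ),
      ξ = ∑ i, c i ∧ (∀ i, ∃ m : ℕ, μ i = (m : ℝ) / 2) ∧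
      (∀ i, L₀ (c i) = ((μ i : ℝ) : ℂ) • c i) ∧
      (∀ i j, i ≠ j → ⟪c i, c j⟫_ℂ = 0))
    (hadj : ∀ (r : ℝ) (ξ η : V), ⟪G r ξ, η⟫_ℂ = ⟪ξ, G (-r) η⟫_ℂ)
    (hanti : ∀ (r : ℝ) (ξ : V), G r (G (-r) ξ) + G (-r) (G r ξ) = (2 : ℂ) • L₀ ξ)
    (hcomm : ∀ (r : ℝ) (ξ : V), L₀ (G r ξ) = G r (L₀ ξ) - (r : ℂ) • G r ξ)
    (s : ℝ) :
    ∃ k > (0 : ℝ), ∀ r : ℝ, (∃ z : ℤ, r = (z : ℝ) + 1/2) →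
      ∀ ξ : V, ‖T s (G r ξ)‖ ≤ k * (1 + |r|) ^ (|s| + 1/2) * ‖T (s + 1/2) ξ‖ := by
  classical
  -- symmetry of L₀
  have hsym : ∀ ξ η : V, ⟪L₀ ξ, η⟫_ℂ = ⟪ξ, L₀ η⟫_ℂ := by
    intro ξ η
    have e1 : ⟪G (1/2) (G (-(1/2)) ξ), η⟫_ℂ = ⟪G (-(1/2)) ξ, G (-(1/2)) η⟫_ℂ :=
      hadj (1/2) _ η
    have e2 : ⟪G (-(1/2)) (G (1/2) ξ), η⟫_ℂ = ⟪G (1/2) ξ, G (1/2) η⟫_ℂ := by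
      have := hadj (-(1/2)) (G (1/2) ξ) η
      rwa [neg_neg] at this
    have e3 : ⟪ξ, G (1/2) (G (-(1/2)) η)⟫_ℂ = ⟪G (-(1/2)) ξ, G (-(1/2)) η⟫_ℂ := by
      have := hadj (-(1/2)) ξ (G (-(1/2)) η)
      rw [neg_neg] at this
      exact this.symm
    have e4 : ⟪ξ, G (-(1/2)) (G (1/2) η)⟫_ℂ = ⟪G (1/2) ξ, G (1/2) η⟫_ℂ :=
      (hadj (1/2) ξ (G (1/2) η)).symm
    have hl : ⟪(2:ℂ) • L₀ ξ, η⟫_ℂ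
        = ⟪G (-(1/2)) ξ, G (-(1/2)) η⟫_ℂ + ⟪G (1/2) ξ, G (1/2) η⟫_ℂ := by
      rw [← hanti (1/2) ξ, inner_add_left, e1, e2]
    have hr : ⟪ξ, (2:ℂ) • L₀ η⟫_ℂ
        = ⟪G (-(1/2)) ξ, G (-(1/2)) η⟫_ℂ + ⟪G (1/2) ξ, G (1/2) η⟫_ℂ := by
      rw [← hanti (1/2) η, inner_add_right, e3, e4]
    rw [inner_smul_left] at hl
    rw [inner_smul_right] at hr
    have h2 : (starRingEnd ℂ) (2:ℂ) = 2 := map_ofNat _ 2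
    rw [h2] at hl
    exact mul_left_cancel₀ two_ne_zero (hl.trans hr.symm)
  -- eigenvectors with distinct real eigenvalues are orthogonal
  have horth : ∀ (a b : V) (α β : ℝ), L₀ a = (α:ℂ) • a → L₀ b = (β:ℂ) • b →
      α ≠ β → ⟪a, b⟫_ℂ = 0 := by
    intro a b α β hA hB hne
    have h := hsym a b
    rw [hA, hB, inner_smul_left, inner_smul_right, Complex.conj_ofReal] at h
    have hz : ((α:ℂ) - β) * ⟪a, b⟫_ℂ = 0 := by linear_combination h
    rcases mul_eq_zero.1 hz with h' | h'
    · exfalso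
      apply hne
      have : (α:ℂ) = β := sub_eq_zero.1 h'
      exact_mod_cast this
    · exact h'
  -- eigenvalue shift under G r
  have heig : ∀ (r μ : ℝ) (c : V), L₀ c = (μ:ℂ) • c →
      L₀ (G r c) = ((μ - r : ℝ):ℂ) • G r c := by
    intro r μ c hc
    rw [hcomm r c, hc, map_smul]
    push_cast
    rw [sub_smul]
  -- eigenvalues of nonzero eigenvectors are nonnegative
  have hpos : ∀ (ν : ℝ) (η : V), η ≠ 0 → L₀ η = (ν:ℂ) • η → 0 ≤ ν := by
    intro ν η hne hη
    obtain ⟨n, c, μ, hsum, hhalf, heigs, horthc⟩ := hdiag η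
    have hex : ∃ j, c j ≠ 0 := by
      by_contra h
      push_neg at h
      exact hne (by rw [hsum]; exact Finset.sum_eq_zero fun i _ => h i)
    obtain ⟨j, hj⟩ := hex
    have hinner : ⟪c j, η⟫_ℂ = ⟪c j, c j⟫_ℂ := by
      rw [hsum, inner_sum, Finset.sum_eq_single_of_mem j (Finset.mem_univ j)]
      intro i _ hij
      exact horthc j i (fun e => hij e.symm)
    have h1 : ⟪c j, L₀ η⟫_ℂ = (μ j : ℂ) * ⟪c j, c j⟫_ℂ := by
      rw [hsum, map_sum, inner_sum, Finset.sum_eq_single_of_mem j (Finset.mem_univ j)]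
      · rw [heigs j, inner_smul_right]
      · intro i _ hij
        rw [heigs i, inner_smul_right, horthc j i (fun e => hij e.symm), mul_zero]
    have h2 : ⟪c j, L₀ η⟫_ℂ = (ν : ℂ) * ⟪c j, c j⟫_ℂ := by
      rw [hη, inner_smul_right, hinner]
    have hnz : ⟪c j, c j⟫_ℂ ≠ 0 := by
      simpa [inner_self_eq_zero] using hj
    have hc : (ν : ℂ) = (μ j : ℂ) := mul_right_cancel₀ hnz (h2.symm.trans h1)
    have hν : ν = μ j := by exact_mod_cast hc
    obtain ⟨m, hm⟩ := hhalf j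
    rw [hν, hm]
    positivity
  -- norm bound for G r on eigenvectors
  have hGnorm : ∀ (r μ : ℝ) (c : V), L₀ c = (μ:ℂ) • c →
      ‖G r c‖ ^ 2 ≤ 2 * μ * ‖c‖ ^ 2 := by
    intro r μ c hc
    have key : ⟪c, G r (G (-r) c) + G (-r) (G r c)⟫_ℂ = ⟪c, (2:ℂ) • L₀ c⟫_ℂ := by
      rw [hanti]
    have e1 : ⟪c, G r (G (-r) c)⟫_ℂ = (‖G (-r) c‖ : ℂ) ^ 2 := by
      have h := hadj (-r) c (G (-r) c)
      rw [neg_neg] at h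
      rw [← h, inner_self_eq_norm_sq_to_K]
      norm_cast
    have e2 : ⟪c, G (-r) (G r c)⟫_ℂ = (‖G r c‖ : ℂ) ^ 2 := by
      rw [← hadj r c (G r c), inner_self_eq_norm_sq_to_K]
      norm_cast
    have e3 : ⟪c, (2:ℂ) • L₀ c⟫_ℂ = 2 * (μ:ℂ) * (‖c‖ : ℂ) ^ 2 := by
      rw [hc, inner_smul_right, inner_smul_right, inner_self_eq_norm_sq_to_K]
      have hco : (RCLike.ofReal ‖c‖ : ℂ) = Complex.ofReal ‖c‖ := rfl
      rw [hco]
      ring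
    rw [inner_add_right, e1, e2, e3] at key
    have hre : ‖G (-r) c‖ ^ 2 + ‖G r c‖ ^ 2 = 2 * μ * ‖c‖ ^ 2 := by
      exact_mod_cast key
    nlinarith [sq_nonneg ‖G (-r) c‖]
  -- the per-eigenvector estimate
  have heigest : ∀ (r μ : ℝ) (c : V), 0 ≤ μ → L₀ c = (μ:ℂ) • c →
      ‖T s (G r c)‖ ≤ Real.sqrt 2 * (1 + |r|) ^ (|s| + 1/2) * ‖T (s + 1/2) c‖ := by
    intro r μ c hμ hc
    have hb1 : (0:ℝ) < 1 + μ := by linarith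
    have hnc : ‖T (s + 1/2) c‖ = (1 + μ) ^ (s + 1/2) * ‖c‖ := by
      rw [hT _ _ _ hc, norm_smul, Real.norm_eq_abs,
        abs_of_pos (Real.rpow_pos_of_pos hb1 _)]
    by_cases h0 : G r c = 0
    · rw [h0, map_zero, norm_zero]
      positivity
    · have hν : 0 ≤ μ - r := hpos _ _ h0 (heig r μ c hc)
      have ha1 : (0:ℝ) < 1 + (μ - r) := by linarith
      have hnG : ‖T s (G r c)‖ = (1 + (μ - r)) ^ s * ‖G r c‖ := by
        rw [hT _ _ _ (heig r μ c hc), norm_smul, Real.norm_eq_abs,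
          abs_of_pos (Real.rpow_pos_of_pos ha1 _)]
      have hg2 : ‖G r c‖ ^ 2 ≤ 2 * μ * ‖c‖ ^ 2 := hGnorm r μ c hc
      have hG : ‖G r c‖ ≤ Real.sqrt 2 * (1 + μ) ^ ((1:ℝ)/2) * ‖c‖ := by
        have hsq : (Real.sqrt 2 * (1 + μ) ^ ((1:ℝ)/2) * ‖c‖) ^ 2
            = 2 * (1 + μ) * ‖c‖ ^ 2 := by
          rw [mul_pow, mul_pow, Real.sq_sqrt (by norm_num : (0:ℝ) ≤ 2),
            ← Real.rpow_natCast ((1 + μ) ^ ((1:ℝ)/2)) 2, ← Real.rpow_mul hb1.le]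
          norm_num
        have h2 : ‖G r c‖ ^ 2 ≤ (Real.sqrt 2 * (1 + μ) ^ ((1:ℝ)/2) * ‖c‖) ^ 2 := by
          rw [hsq]
          nlinarith [sq_nonneg ‖c‖]
        exact le_of_pow_le_pow_left₀ two_ne_zero (by positivity) h2
      have hab : (1 + (μ - r)) ^ s ≤ (1 + |r|) ^ |s| * (1 + μ) ^ s := by
        apply ns_rpow_bound (by linarith) (by linarith)
          (by linarith [abs_nonneg r])
        · nlinarith [neg_abs_le r, abs_nonneg r, mul_nonneg hμ (abs_nonneg r)]
        · nlinarith [le_abs_self r, mul_nonneg hν (abs_nonneg r)]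
      have hrs : (1 + |r|) ^ |s| ≤ (1 + |r|) ^ (|s| + 1/2) :=
        Real.rpow_le_rpow_of_exponent_le (by linarith [abs_nonneg r]) (by linarith)
      calc ‖T s (G r c)‖ = (1 + (μ - r)) ^ s * ‖G r c‖ := hnG
        _ ≤ (1 + (μ - r)) ^ s * (Real.sqrt 2 * (1 + μ) ^ ((1:ℝ)/2) * ‖c‖) :=
            mul_le_mul_of_nonneg_left hG (Real.rpow_nonneg ha1.le _)
        _ ≤ ((1 + |r|) ^ |s| * (1 + μ) ^ s) * (Real.sqrt 2 * (1 + μ) ^ ((1:ℝ)/2) * ‖c‖) :=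
            mul_le_mul_of_nonneg_right hab (by positivity)
        _ = Real.sqrt 2 * (1 + |r|) ^ |s| * ((1 + μ) ^ (s + 1/2) * ‖c‖) := by
            rw [Real.rpow_add hb1 s (1/2)]
            ring
        _ ≤ Real.sqrt 2 * (1 + |r|) ^ (|s| + 1/2) * ((1 + μ) ^ (s + 1/2) * ‖c‖) := by
            have hnn : (0:ℝ) ≤ (1 + μ) ^ (s + 1/2) * ‖c‖ := by positivity
            have := mul_le_mul_of_nonneg_left hrs (Real.sqrt_nonneg 2)
            exact mul_le_mul_of_nonneg_right this hnn
        _ = Real.sqrt 2 * (1 + |r|) ^ (|s| + 1/2) * ‖T (s + 1/2) c‖ := by rw [hnc]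
  have hsmul0 : ∀ (a b : ℝ) (x y : V), ⟪x, y⟫_ℂ = 0 → ⟪a • x, b • y⟫_ℂ = 0 := by
    intro a b x y h
    rw [RCLike.real_smul_eq_coe_smul (K := ℂ) a, RCLike.real_smul_eq_coe_smul (K := ℂ) b,
      inner_smul_left, inner_smul_right, h, mul_zero, mul_zero]
  -- main argument
  refine ⟨Real.sqrt 2, by positivity, ?_⟩
  intro r _ ξ
  obtain ⟨n, c, μ, hsum, hhalf, heigs, horthc⟩ := hdiag ξ
  set S : Finset ℝ := Finset.image μ Finset.univ with hS
  set d : ℝ → V := fun t => ∑ i ∈ Finset.univ.filter (fun i => μ i = t), c i with hd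
  have hdsum : ∑ t ∈ S, d t = ξ := by
    rw [hsum]
    exact Finset.sum_fiberwise_of_maps_to
      (fun i _ => Finset.mem_image_of_mem μ (Finset.mem_univ i)) c
  have hdeig : ∀ t : ℝ, L₀ (d t) = (t:ℂ) • d t := by
    intro t
    rw [hd]
    simp only
    rw [map_sum, Finset.smul_sum]
    refine Finset.sum_congr rfl fun i hi => ?_
    rw [heigs i, (Finset.mem_filter.1 hi).2]
  have hdpos : ∀ t ∈ S, (0:ℝ) ≤ t := by
    intro t ht
    obtain ⟨i, _, hit⟩ := Finset.mem_image.1 ht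
    obtain ⟨m, hm⟩ := hhalf i
    rw [← hit, hm]
    positivity
  have hdorth : ∀ t ∈ S, ∀ t' ∈ S, t ≠ t' → ⟪d t, d t'⟫_ℂ = 0 := by
    intro t _ t' _ hne
    rw [hd]
    simp only
    rw [sum_inner]
    refine Finset.sum_eq_zero fun i hi => ?_
    rw [inner_sum]
    refine Finset.sum_eq_zero fun j hj => ?_
    refine horthc i j fun e => hne ?_
    rw [← (Finset.mem_filter.1 hi).2, e, (Finset.mem_filter.1 hj).2]
  have hP1 : ‖T s (G r ξ)‖ ^ 2 = ∑ t ∈ S, ‖T s (G r (d t))‖ ^ 2 := by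
    rw [← hdsum, map_sum, map_sum]
    apply ns_pythagoras
    intro t ht t' ht' hne
    rw [hT s (t - r) _ (heig r t (d t) (hdeig t)),
      hT s (t' - r) _ (heig r t' (d t') (hdeig t'))]
    exact hsmul0 _ _ _ _
      (horth (G r (d t)) (G r (d t')) (t - r) (t' - r)
        (heig r t (d t) (hdeig t)) (heig r t' (d t') (hdeig t'))
        (fun e => hne (by linarith)))
  have hP2 : ‖T (s + 1/2) ξ‖ ^ 2 = ∑ t ∈ S, ‖T (s + 1/2) (d t)‖ ^ 2 := by
    rw [← hdsum, map_sum]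
    apply ns_pythagoras
    intro t ht t' ht' hne
    rw [hT (s + 1/2) t _ (hdeig t), hT (s + 1/2) t' _ (hdeig t')]
    exact hsmul0 _ _ _ _ (hdorth t ht t' ht' hne)
  have hsq : ‖T s (G r ξ)‖ ^ 2
      ≤ (Real.sqrt 2 * (1 + |r|) ^ (|s| + 1/2) * ‖T (s + 1/2) ξ‖) ^ 2 := by
    rw [hP1, mul_pow, hP2, Finset.mul_sum]
    apply Finset.sum_le_sum
    intro t ht
    have h := heigest r t (d t) (hdpos t ht) (hdeig t)
    calc ‖T s (G r (d t))‖ ^ 2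
        ≤ (Real.sqrt 2 * (1 + |r|) ^ (|s| + 1/2) * ‖T (s + 1/2) (d t)‖) ^ 2 :=
          pow_le_pow_left₀ (norm_nonneg _) h 2
      _ = (Real.sqrt 2 * (1 + |r|) ^ (|s| + 1/2)) ^ 2 * ‖T (s + 1/2) (d t)‖ ^ 2 := by
          ring
  exact le_of_pow_le_pow_left₀ two_ne_zero (by positivity) hsq
end

section
/- Let f be a function continuous on the closed unit disc, holomorphic on the open unit disc, with nonnegative Taylor coefficients at 0, and suppose f vanishes on an arc of the unit circle of positive length. Then f is identically zero. -/
open Metric Filter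

/-- A function continuous on the closed unit disc, holomorphic on the
open disc, with nonnegative Taylor coefficients at 0, which vanishes on an arc of the
unit circle of positive length, is identically zero on the closed disc. -/
theorem vanishing_on_arc_of_nonneg_coeffs
    (f : ℂ → ℂ) (a : ℕ → ℝ)
    (ha : ∀ n, 0 ≤ a n) (hsum : Summable a)
    (hf : ∀ z : ℂ, ‖z‖ ≤ 1 → f z = ∑' n : ℕ, (a n : ℂ) * z ^ n)
    (θ₁ ε : ℝ) (hε : 0 < ε)
    (hvan : ∀ θ : ℝ, |θ - θ₁| ≤ ε → f (Complex.exp (θ * Complex.I)) = 0) :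
    ∀ z : ℂ, ‖z‖ ≤ 1 → f z = 0 := by
  -- It suffices to show all coefficients vanish.
  suffices han : ∀ n, a n = 0 by
    intro z hz
    rw [hf z hz]
    simp [han]
  -- summability of the series on the closed disc
  have hsummz : ∀ z : ℂ, ‖z‖ ≤ 1 → Summable (fun n => (a n : ℂ) * z ^ n) := by
    intro z hz
    apply Summable.of_norm_bounded hsum
    intro n
    rw [norm_mul, norm_pow, Complex.norm_real, Real.norm_eq_abs, _root_.abs_of_nonneg (ha n)]
    calc a n * ‖z‖ ^ n ≤ a n * 1 ^ n := by
          gcongr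
          exact ha n
      _ = a n := by ring
  -- the formal power series
  set p : FormalMultilinearSeries ℂ ℂ ℂ :=
    FormalMultilinearSeries.ofScalars ℂ (fun n => (a n : ℂ)) with hp
  have hpn : ∀ n, ‖p n‖ = a n := by
    intro n
    rw [hp, FormalMultilinearSeries.ofScalars_norm, Complex.norm_real, Real.norm_eq_abs,
      _root_.abs_of_nonneg (ha n)]
  have hps : HasFPowerSeriesOnBall f p 0 1 := by
    refine ⟨?_, zero_lt_one, ?_⟩
    · have := p.le_radius_of_summable (r := 1) (by simpa [hpn] using hsum)
      simpa using this
    · intro y hy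
      have hy1 : ‖y‖ ≤ 1 := by
        rw [EMetric.mem_ball, edist_zero_right] at hy
        have h2 : ‖y‖₊ < 1 := by simpa [enorm_eq_nnnorm] using hy
        exact_mod_cast h2.le
      simp only [hp, FormalMultilinearSeries.ofScalars_apply_eq, smul_eq_mul, zero_add]
      rw [hf y hy1]
      exact (hsummz y hy1).hasSum
  -- continuity on closed disc
  have hcont : ContinuousOn f (closedBall (0 : ℂ) 1) := by
    rw [continuousOn_iff_continuous_restrict]
    have heq : (closedBall (0 : ℂ) 1).domRestrict f
        = fun z : closedBall (0 : ℂ) 1 => ∑' n : ℕ, (a n : ℂ) * (z : ℂ) ^ n := by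
      funext z
      exact hf z (mem_closedBall_zero_iff.mp z.2)
    rw [heq]
    refine continuous_tsum (fun n => by continuity) hsum ?_
    intro n z
    have hz1 : ‖(z : ℂ)‖ ≤ 1 := mem_closedBall_zero_iff.mp z.2
    rw [norm_mul, norm_pow, Complex.norm_real, Real.norm_eq_abs, _root_.abs_of_nonneg (ha n)]
    calc a n * ‖(z : ℂ)‖ ^ n ≤ a n * 1 ^ n := by
          gcongr
          exact ha n
      _ = a n := by ring
  have hball : Metric.eball (0 : ℂ) 1 = ball (0 : ℂ) 1 := by
    simpa using Metric.emetric_ball_nnreal (x := (0 : ℂ)) (ε := 1)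
  have hdiff : DifferentiableOn ℂ f (ball (0 : ℂ) 1) := by
    rw [← hball]; exact hps.differentiableOn
  -- set up the rotations
  set N : ℕ := ⌈2 * Real.pi / ε⌉₊ + 1 with hN
  have hNpos : (0 : ℝ) < N := by positivity
  have hNε : 2 * Real.pi / N ≤ ε := by
    rw [div_le_iff₀ hNpos]
    have h1 : 2 * Real.pi / ε ≤ N := by
      calc 2 * Real.pi / ε ≤ ⌈2 * Real.pi / ε⌉₊ := Nat.le_ceil _
        _ ≤ N := by exact_mod_cast Nat.le_succ _
    calc 2 * Real.pi = 2 * Real.pi / ε * ε := by field_simp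
      _ ≤ N * ε := by gcongr
      _ = ε * N := by ring
  set e : ℕ → ℂ := fun k => Complex.exp ((θ₁ + 2 * Real.pi * k / N : ℝ) * Complex.I) with he
  have henorm : ∀ k, ‖e k‖ = 1 := fun k => by
    rw [he]; exact Complex.norm_exp_ofReal_mul_I _
  set g : ℂ → ℂ := fun z => ∏ k ∈ Finset.range N, f (z * e k) with hg
  -- g is DiffContOnCl
  have hgd : DiffContOnCl ℂ g (ball (0 : ℂ) 1) := by
    constructor
    · apply DifferentiableOn.fun_finsetProd
      intro k _
      have hmaps : Set.MapsTo (fun z : ℂ => z * e k) (ball (0 : ℂ) 1) (ball (0 : ℂ) 1) := by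
        intro z hz
        rw [mem_ball_zero_iff] at hz ⊢
        rw [norm_mul, henorm k, mul_one]
        exact hz
      exact hdiff.comp ((differentiable_id.mul_const _).differentiableOn) hmaps
    · rw [closure_ball (0 : ℂ) one_ne_zero]
      apply continuousOn_finset_prod
      intro k _
      have hmaps : Set.MapsTo (fun z : ℂ => z * e k) (closedBall (0 : ℂ) 1)
          (closedBall (0 : ℂ) 1) := by
        intro z hz
        rw [mem_closedBall_zero_iff] at hz ⊢
        rw [norm_mul, henorm k, mul_one]
        exact hz
      exact hcont.comp ((continuous_id.mul continuous_const).continuousOn) hmaps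
  -- g vanishes on the boundary
  have hfrontier : ∀ z ∈ frontier (ball (0 : ℂ) 1), g z = 0 := by
    rw [frontier_ball (0 : ℂ) one_ne_zero]
    intro z hz
    rw [mem_sphere_zero_iff_norm] at hz
    set φ : ℝ := Complex.arg z with hφ
    have hz' : z = Complex.exp ((φ : ℂ) * Complex.I) := by
      conv_lhs => rw [← Complex.norm_mul_exp_arg_mul_I z]
      rw [hz]
      simp [hφ]
    set m : ℤ := ⌈φ / (2 * Real.pi)⌉ with hm
    set ψ : ℝ := 2 * Real.pi * m - φ with hψ
    have hπ : (0 : ℝ) < 2 * Real.pi := by positivity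
    have hψ0 : 0 ≤ ψ := by
      rw [hψ, sub_nonneg, ← div_le_iff₀' hπ]
      exact Int.le_ceil _
    have hψ2 : ψ < 2 * Real.pi := by
      rw [hψ, sub_lt_iff_lt_add]
      have := Int.ceil_lt_add_one (φ / (2 * Real.pi))
      calc 2 * Real.pi * m < 2 * Real.pi * (φ / (2 * Real.pi) + 1) := by
            rw [mul_lt_mul_iff_right₀ hπ]; exact this
        _ = 2 * Real.pi + φ := by field_simp; ring
    set k : ℕ := ⌊ψ * N / (2 * Real.pi)⌋₊ with hk
    have hknn : 0 ≤ ψ * N / (2 * Real.pi) := by positivity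
    have hkN : k < N := by
      rw [hk, Nat.floor_lt hknn]
      rw [div_lt_iff₀ hπ]
      calc ψ * N < 2 * Real.pi * N := by
            apply mul_lt_mul_of_pos_right hψ2 hNpos
        _ = N * (2 * Real.pi) := by ring
    set δ : ℝ := ψ - 2 * Real.pi * k / N with hδ
    have hδ0 : 0 ≤ δ := by
      rw [hδ, sub_nonneg, div_le_iff₀ hNpos]
      have h1 : (k : ℝ) ≤ ψ * N / (2 * Real.pi) := Nat.floor_le hknn
      calc 2 * Real.pi * k ≤ 2 * Real.pi * (ψ * N / (2 * Real.pi)) := by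
            exact mul_le_mul_of_nonneg_left h1 hπ.le
        _ = ψ * N := by field_simp
    have hδε : δ ≤ ε := by
      have h1 : ψ * N / (2 * Real.pi) < k + 1 := Nat.lt_floor_add_one _
      have h2 : ψ < 2 * Real.pi * (k + 1) / N := by
        rw [lt_div_iff₀ hNpos]
        calc ψ * N = ψ * N / (2 * Real.pi) * (2 * Real.pi) := by field_simp
          _ < (k + 1) * (2 * Real.pi) := by
              apply mul_lt_mul_of_pos_right h1 hπ
          _ = 2 * Real.pi * (k + 1) := by ring
      have : δ < 2 * Real.pi / N := by
        rw [hδ, sub_lt_iff_lt_add]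
        calc ψ < 2 * Real.pi * (k + 1) / N := h2
          _ = 2 * Real.pi / N + 2 * Real.pi * k / N := by ring
      exact (this.trans_le hNε).le
    -- the k-th factor vanishes at z
    have hzero : f (z * e k) = 0 := by
      have harg : z * e k = Complex.exp (((θ₁ - δ : ℝ) : ℂ) * Complex.I) := by
        rw [hz', he, ← Complex.exp_add]
        have : (φ : ℂ) * Complex.I + ((θ₁ + 2 * Real.pi * k / N : ℝ) : ℂ) * Complex.I
            = ((θ₁ - δ : ℝ) : ℂ) * Complex.I + (m : ℂ) * (2 * Real.pi * Complex.I) := by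
          have hδψ : (δ : ℝ) = 2 * Real.pi * m - φ - 2 * Real.pi * k / N := by
            rw [hδ, hψ]
          rw [hδψ]
          push_cast
          ring
        rw [this, Complex.exp_add, Complex.exp_int_mul_two_pi_mul_I, mul_one]
      rw [harg]
      apply hvan
      rw [show θ₁ - δ - θ₁ = -δ by ring, abs_neg, abs_of_nonneg hδ0]
      exact hδε
    exact Finset.prod_eq_zero (Finset.mem_range.mpr hkN) hzero
  -- by the maximum modulus principle, g vanishes on the ball
  have hmax : ∀ z ∈ ball (0 : ℂ) 1, g z = 0 := by
    intro z hz
    have h0 : ‖g z‖ ≤ 0 := Complex.norm_le_of_forall_mem_frontier_norm_le (isBounded_ball) hgd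
      (fun w hw => by rw [hfrontier w hw]; simp) (subset_closure hz)
    exact norm_le_zero_iff.mp h0
  -- f is analytic at 0 along each rotation
  have hA : ∀ k : ℕ, AnalyticAt ℂ (fun z : ℂ => f (z * e k)) 0 := by
    intro k
    have hinner : AnalyticAt ℂ (fun z : ℂ => z * e k) 0 :=
      (analyticAt_id).mul analyticAt_const
    have h0 : AnalyticAt ℂ f ((0 : ℂ) * e k) := by simpa using hps.analyticAt
    exact AnalyticAt.comp (g := f) (f := fun z : ℂ => z * e k) (x := 0) h0 hinner
  -- some factor vanishes near 0
  have hk0 : ∃ k ∈ Finset.range N, ∀ᶠ z in nhds (0 : ℂ), f (z * e k) = 0 := by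
    by_contra hcon
    push_neg at hcon
    have hne : ∀ k ∈ Finset.range N, ∀ᶠ z in nhdsWithin (0 : ℂ) {(0 : ℂ)}ᶜ,
        f (z * e k) ≠ 0 := by
      intro k hkmem
      rcases (hA k).eventually_eq_zero_or_eventually_ne_zero with h | h
      · exact absurd h (Filter.not_eventually.mpr (hcon k hkmem))
      · exact h
    have hballev : ∀ᶠ z in nhdsWithin (0 : ℂ) {(0 : ℂ)}ᶜ, z ∈ ball (0 : ℂ) 1 :=
      Filter.Eventually.filter_mono nhdsWithin_le_nhds
        (eventually_of_mem (ball_mem_nhds 0 one_pos) fun x hx => hx)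
    have hall := ((Filter.eventually_all_finset (Finset.range N)).mpr hne).and hballev
    obtain ⟨z, hz1, hz2⟩ := hall.exists
    exact (Finset.prod_ne_zero_iff.mpr hz1) (hmax z hz2)
  obtain ⟨k, -, hev⟩ := hk0
  have hek : e k ≠ 0 := Complex.exp_ne_zero _
  -- f vanishes near 0
  have hf0 : ∀ᶠ w in nhds (0 : ℂ), f w = 0 := by
    have ht : Filter.Tendsto (fun w : ℂ => w * (e k)⁻¹) (nhds 0) (nhds 0) := by
      have := (continuous_id.fun_mul (continuous_const (y := (e k)⁻¹))).tendsto (0 : ℂ)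
      simpa using this
    filter_upwards [ht.eventually hev] with w hw
    rw [mul_assoc, inv_mul_cancel₀ hek, mul_one] at hw
    exact hw
  -- extract a positive radius
  rw [Metric.eventually_nhds_iff] at hf0
  obtain ⟨r0, hr0pos, hr0⟩ := hf0
  set r : ℝ := min (r0 / 2) (1 / 2) with hr
  have hrpos : 0 < r := lt_min (by linarith) (by norm_num)
  have hrlt : r < r0 := by
    calc r ≤ r0 / 2 := min_le_left _ _
      _ < r0 := by linarith
  have hrle1 : r ≤ 1 := by
    calc r ≤ 1 / 2 := min_le_right _ _
      _ ≤ 1 := by norm_num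
  have hrnorm : ‖(r : ℂ)‖ ≤ 1 := by
    rw [Complex.norm_real, Real.norm_eq_abs, abs_of_pos hrpos]; exact hrle1
  have hfr : f (r : ℂ) = 0 := by
    apply hr0
    rw [dist_zero_right, Complex.norm_real, Real.norm_eq_abs, abs_of_pos hrpos]
    exact hrlt
  -- the real series vanishes
  have hsumr : Summable (fun n => a n * r ^ n) := by
    apply Summable.of_norm_bounded hsum
    intro n
    rw [Real.norm_eq_abs, _root_.abs_of_nonneg (mul_nonneg (ha n) (pow_nonneg hrpos.le n))]
    have hrn1 : r ^ n ≤ 1 := pow_le_one₀ hrpos.le hrle1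
    calc a n * r ^ n ≤ a n * 1 := mul_le_mul_of_nonneg_left hrn1 (ha n)
      _ = a n := mul_one _
  have htreal : ∑' n, a n * r ^ n = 0 := by
    have h1 : ((∑' n, a n * r ^ n : ℝ) : ℂ) = ∑' n, ((a n * r ^ n : ℝ) : ℂ) :=
      Complex.ofReal_tsum _
    have h2 : (fun n => ((a n * r ^ n : ℝ) : ℂ)) = fun n => (a n : ℂ) * (r : ℂ) ^ n := by
      funext n; push_cast; ring
    rw [← Complex.ofReal_eq_zero, h1, h2, ← hf (r : ℂ) hrnorm, hfr]
  -- conclude each coefficient vanishes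
  intro n
  have hle : a n * r ^ n ≤ 0 := by
    rw [← htreal]
    exact hsumr.le_tsum n fun m _ => mul_nonneg (ha m) (pow_nonneg hrpos.le m)
  have hnn : 0 ≤ a n * r ^ n := mul_nonneg (ha n) (pow_nonneg hrpos.le n)
  have : a n * r ^ n = 0 := le_antisymm hle hnn
  have hrn : r ^ n ≠ 0 := pow_ne_zero n hrpos.ne'
  exact (mul_eq_zero.mp this).resolve_right hrn
end

section
/- Define d_p^m = sin(pπ/m)/sin(π/m) for integers 1 ≤ p ≤ m-1. Then the SU(2) level-ℓ fusion rules are compatible with d: for all spins i, j with m = ℓ+2, p = 2i+1, q = 2j+1, one has d_p^m · d_q^m = Σ_{k ∈ ⟨i,j⟩_ℓ} d_{2k+1}^m, where ⟨i,j⟩_ℓ = { k : |i-j| ≤ k ≤ i+j, k ≡ i+j mod 1, i+j+k ≤ ℓ }. -/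
open Finset

/-- The quantum dimension `d_p^m = sin(pπ/m)/sin(π/m)`. -/
noncomputable def qdim (p : ℕ) (m : ℝ) : ℝ :=
  Real.sin ((p : ℝ) * Real.pi / m) / Real.sin (Real.pi / m)

/-- Product-to-sum step: `cos(kθ) - cos((k+2)θ) = 2 sin θ sin((k+1)θ)`. -/
lemma qdim_step (θ k : ℝ) :
    Real.cos (k * θ) - Real.cos ((k + 2) * θ) = 2 * Real.sin θ * Real.sin ((k + 1) * θ) := by
  rw [Real.cos_sub_cos]
  have h1 : (k * θ + (k + 2) * θ) / 2 = (k + 1) * θ := by ring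
  have h2 : (k * θ - (k + 2) * θ) / 2 = -θ := by ring
  rw [h1, h2, Real.sin_neg]
  ring

/-- Telescoping sum of sines in arithmetic progression. -/
lemma qdim_tele (θ : ℝ) (c : ℕ) (n : ℕ) :
    ∑ t ∈ Finset.range (n + 1), 2 * Real.sin θ * Real.sin (((c : ℝ) + 2 * t + 1) * θ)
      = Real.cos ((c : ℝ) * θ) - Real.cos (((c : ℝ) + 2 * n + 2) * θ) := by
  induction n with
  | zero =>
      rw [Finset.sum_range_one]
      norm_num
      exact (qdim_step θ (c : ℝ)).symm
  | succ n ih =>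
      rw [Finset.sum_range_succ, ih]
      have h := qdim_step θ ((c : ℝ) + 2 * n + 2)
      have h1 : ((c : ℝ) + 2 * n + 2 + 2) = ((c : ℝ) + 2 * (n + 1) + 2) := by ring
      have h2 : ((c : ℝ) + 2 * n + 2 + 1) = ((c : ℝ) + 2 * (n + 1 : ℕ) + 1) := by push_cast; ring
      rw [h1, h2] at h
      push_cast
      push_cast at h
      linarith

/-- The SU(2) level-`ℓ` fusion rules are compatible with the quantum
dimension `d_p^m = sin(pπ/m)/sin(π/m)`, `m = ℓ+2`:
`d_p^m · d_q^m = Σ_{k ∈ ⟨i,j⟩_ℓ} d_{2k+1}^m` where `p = 2i+1`, `q = 2j+1` and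
`⟨i,j⟩_ℓ = {k : |i-j| ≤ k ≤ i+j, k ≡ i+j mod 1, i+j+k ≤ ℓ}`.
Spins are encoded by their doubles: `a = 2i`, `b = 2j`, `u = 2k`. -/
theorem su2_fusion_quantum_dimension
    (l : ℕ) (hl : 1 ≤ l) (a b : ℕ) (ha : a ≤ l) (hb : b ≤ l) :
    qdim (a + 1) ((l : ℝ) + 2) * qdim (b + 1) ((l : ℝ) + 2) =
      ∑ u ∈ (Finset.range (a + b + 1)).filter
          (fun u : ℕ => |(a : ℤ) - (b : ℤ)| ≤ (u : ℤ) ∧ (a + b + u) % 2 = 0 ∧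
            a + b + u ≤ 2 * l),
        qdim (u + 1) ((l : ℝ) + 2) := by
  set c : ℕ := max a b - min a b with hc
  set M : ℕ := min (a + b) (2 * l - a - b) with hM
  set n : ℕ := (M - c) / 2 with hn
  set θ : ℝ := Real.pi / ((l : ℝ) + 2) with hθ
  have hm0 : (0 : ℝ) < (l : ℝ) + 2 := by positivity
  have hθpos : 0 < θ := by positivity
  have hθlt : θ < Real.pi := by
    rw [hθ, div_lt_iff₀ hm0]
    nlinarith [Real.pi_pos]
  have hs : Real.sin θ ≠ 0 := ne_of_gt (Real.sin_pos_of_pos_of_lt_pi hθpos hθlt)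
  -- rewrite the index set as an arithmetic progression
  have hset : (Finset.range (a + b + 1)).filter
        (fun u : ℕ => |(a : ℤ) - (b : ℤ)| ≤ (u : ℤ) ∧ (a + b + u) % 2 = 0 ∧
          a + b + u ≤ 2 * l)
      = (Finset.range (n + 1)).image (fun t => c + 2 * t) := by
    ext u
    simp only [Finset.mem_filter, Finset.mem_range, Finset.mem_image, abs_le]
    constructor
    · rintro ⟨h1, ⟨h2a, h2b⟩, h3, h4⟩
      exact ⟨(u - c) / 2, by omega, by omega⟩
    · rintro ⟨t, ht, rfl⟩
      refine ⟨by omega, ⟨by omega, by omega⟩, by omega, by omega⟩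
  have hinj : Set.InjOn (fun t => c + 2 * t) (Finset.range (n + 1)) := by
    intro x _ y _ h
    simpa using h
  rw [hset, Finset.sum_image hinj]
  -- express qdim in terms of θ
  have expand : ∀ p : ℕ, qdim (p + 1) ((l : ℝ) + 2)
      = Real.sin (((p : ℝ) + 1) * θ) / Real.sin θ := by
    intro p
    have : ((p : ℕ) + 1 : ℕ) * Real.pi / ((l : ℝ) + 2) = ((p : ℝ) + 1) * θ := by
      rw [hθ]; push_cast; ring
    simp only [qdim, hθ]
    rw [show (((p : ℕ) + 1 : ℕ) : ℝ) * Real.pi / ((l : ℝ) + 2) = ((p : ℝ) + 1) * θ from by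
      rw [hθ]; push_cast; ring]
  have hsumeq : ∑ t ∈ Finset.range (n + 1), qdim (c + 2 * t + 1) ((l : ℝ) + 2)
      = (∑ t ∈ Finset.range (n + 1), Real.sin (((c : ℝ) + 2 * t + 1) * θ)) / Real.sin θ := by
    rw [Finset.sum_div]
    refine Finset.sum_congr rfl fun t _ => ?_
    rw [expand (c + 2 * t)]
    push_cast
    ring_nf
  -- key trigonometric identity
  have hcM : c + 2 * n = M := by omega
  have hcos2 : Real.cos (((c : ℝ) + 2 * n + 2) * θ)
      = Real.cos (((a : ℝ) + b + 2) * θ) := by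
    have hcast : ((c : ℝ) + 2 * n + 2) = ((M : ℝ) + 2) := by
      have : ((c + 2 * n : ℕ) : ℝ) = (M : ℝ) := by rw [hcM]
      push_cast at this ⊢; linarith
    rw [hcast]
    rcases le_or_gt (a + b) l with h | h
    · have : (M : ℝ) = (a : ℝ) + b := by
        have : M = a + b := by omega
        rw [this]; push_cast; ring
      rw [this]
    · have hMval : M = 2 * l - a - b := by omega
      have hcast2 : (M : ℝ) = 2 * l - a - b := by
        have h1 : M + a + b = 2 * l := by omega
        have h2 := congrArg (Nat.cast : ℕ → ℝ) h1
        push_cast at h2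
        linarith
      have harg : ((M : ℝ) + 2) * θ = 2 * Real.pi - ((a : ℝ) + b + 2) * θ := by
        rw [hcast2, hθ]
        field_simp
        ring
      rw [harg, Real.cos_sub, Real.cos_two_pi, Real.sin_two_pi]
      ring
  have hcos1 : Real.cos ((c : ℝ) * θ) - Real.cos (((a : ℝ) + b + 2) * θ)
      = 2 * Real.sin (((a : ℝ) + 1) * θ) * Real.sin (((b : ℝ) + 1) * θ) := by
    rcases le_or_gt a b with h | h
    · have hcast : (c : ℝ) = (b : ℝ) - a := by
        have : c = b - a := by omega
        rw [this]; push_cast [h]; ring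
      rw [hcast, Real.cos_sub_cos]
      have h1 : (((b : ℝ) - a) * θ + ((a : ℝ) + b + 2) * θ) / 2 = ((b : ℝ) + 1) * θ := by ring
      have h2 : (((b : ℝ) - a) * θ - ((a : ℝ) + b + 2) * θ) / 2 = -(((a : ℝ) + 1) * θ) := by ring
      rw [h1, h2, Real.sin_neg]
      ring
    · have hcast : (c : ℝ) = (a : ℝ) - b := by
        have : c = a - b := by omega
        rw [this]; push_cast [le_of_lt h]; ring
      rw [hcast, Real.cos_sub_cos]
      have h1 : (((a : ℝ) - b) * θ + ((a : ℝ) + b + 2) * θ) / 2 = ((a : ℝ) + 1) * θ := by ring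
      have h2 : (((a : ℝ) - b) * θ - ((a : ℝ) + b + 2) * θ) / 2 = -(((b : ℝ) + 1) * θ) := by ring
      rw [h1, h2, Real.sin_neg]
      ring
  have htele := qdim_tele θ c n
  have hkey : (2 * Real.sin θ) * ∑ t ∈ Finset.range (n + 1), Real.sin (((c : ℝ) + 2 * t + 1) * θ)
      = 2 * Real.sin (((a : ℝ) + 1) * θ) * Real.sin (((b : ℝ) + 1) * θ) := by
    rw [Finset.mul_sum]
    calc ∑ t ∈ Finset.range (n + 1), 2 * Real.sin θ * Real.sin (((c : ℝ) + 2 * t + 1) * θ)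
        = Real.cos ((c : ℝ) * θ) - Real.cos (((c : ℝ) + 2 * n + 2) * θ) := htele
      _ = Real.cos ((c : ℝ) * θ) - Real.cos (((a : ℝ) + b + 2) * θ) := by rw [hcos2]
      _ = 2 * Real.sin (((a : ℝ) + 1) * θ) * Real.sin (((b : ℝ) + 1) * θ) := hcos1
  rw [hsumeq, expand a, expand b]
  rw [div_mul_div_comm, div_eq_div_iff (mul_ne_zero hs hs) hs]
  linear_combination (-(Real.sin θ) / 2) * hkey
end

section
/- For the Neveu-Schwarz discrete series representation H_{ij}^ℓ (charge c_m, m = ℓ+2), the quantum dimension d(H_{ij}^ℓ) = (sin(pπ/m)/sin(π/m)) · (sin(qπ/(m+2))/sin(π/(m+2))) with p = 2i+1, q = 2j+1 satisfies: d is multiplicative for the fusion rules, i.e. d(H_{ij}^ℓ)·d(H_{i'j'}^ℓ) = Σ_{(i'',j'') ∈ ⟨i,i'⟩_ℓ × ⟨j,j'⟩_{ℓ+2}} d(H_{i''j''}^ℓ). -/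
open Finset

private lemma cosdiff (A B : ℝ) :
    Real.cos (A - B) - Real.cos (A + B) = 2 * Real.sin A * Real.sin B := by
  rw [Real.cos_sub, Real.cos_add]; ring

private lemma tele (θ c : ℝ) (n : ℕ) :
    ∑ k ∈ Finset.range n, 2 * Real.sin ((c + 2 * k + 1) * θ) * Real.sin θ =
      Real.cos (c * θ) - Real.cos ((c + 2 * n) * θ) := by
  induction n with
  | zero => simp
  | succ n ih =>
    rw [Finset.sum_range_succ, ih]
    have h := cosdiff ((c + 2 * n + 1) * θ) θ
    rw [show ((c + 2 * (n : ℝ) + 1) * θ - θ) = (c + 2 * n) * θ by ring,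
        show ((c + 2 * (n : ℝ) + 1) * θ + θ) = (c + 2 * ((n : ℕ) + 1 : ℕ)) * θ by push_cast; ring] at h
    linarith

private lemma sumUn (a a' : ℕ) (h : a' ≤ a) (θ : ℝ) :
    ∑ u ∈ (Finset.range (a + a' + 1)).filter
        (fun u : ℕ => |(a : ℤ) - (a' : ℤ)| ≤ (u : ℤ) ∧ (a + a' + u) % 2 = 0),
      2 * Real.sin (((u : ℝ) + 1) * θ) * Real.sin θ =
    2 * Real.sin (((a : ℝ) + 1) * θ) * Real.sin (((a' : ℝ) + 1) * θ) := by
  have hset : (Finset.range (a + a' + 1)).filter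
        (fun u : ℕ => |(a : ℤ) - (a' : ℤ)| ≤ (u : ℤ) ∧ (a + a' + u) % 2 = 0) =
      (Finset.range (a' + 1)).image (fun k => a - a' + 2 * k) := by
    ext u
    simp only [Finset.mem_filter, Finset.mem_range, Finset.mem_image, abs_le]
    constructor
    · rintro ⟨hu, ⟨h1, h2⟩, h3⟩
      exact ⟨(u - (a - a')) / 2, by omega, by omega⟩
    · rintro ⟨k, hk, rfl⟩
      omega
  rw [hset, Finset.sum_image (by intro x _ y _ (hxy : a - a' + 2 * x = a - a' + 2 * y); omega)]
  have hterm : ∀ k ∈ Finset.range (a' + 1),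
      2 * Real.sin (((((a - a' + 2 * k : ℕ)) : ℝ) + 1) * θ) * Real.sin θ =
      2 * Real.sin ((((a : ℝ) - (a' : ℝ)) + 2 * k + 1) * θ) * Real.sin θ := by
    intro k _
    congr 3
    push_cast [Nat.cast_sub h]
    ring
  rw [Finset.sum_congr rfl hterm, tele θ ((a : ℝ) - (a' : ℝ)) (a' + 1)]
  have h2 := cosdiff (((a : ℝ) + 1) * θ) (((a' : ℝ) + 1) * θ)
  rw [show (((a : ℝ) + 1) * θ - ((a' : ℝ) + 1) * θ) = ((a : ℝ) - (a' : ℝ)) * θ by ring,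
      show (((a : ℝ) + 1) * θ + ((a' : ℝ) + 1) * θ) = (((a : ℝ) - (a' : ℝ)) + 2 * ((a' + 1 : ℕ) : ℝ)) * θ by push_cast; ring] at h2
  linarith

private lemma dropped (l a a' : ℕ) (ha : a ≤ l) (ha' : a' ≤ l) :
    ∑ u ∈ (((Finset.range (a + a' + 1)).filter
        (fun u : ℕ => |(a : ℤ) - (a' : ℤ)| ≤ (u : ℤ) ∧ (a + a' + u) % 2 = 0)).filter
        (fun u => ¬ (a + a' + u ≤ 2 * l))),
      2 * Real.sin (((u : ℝ) + 1) * (Real.pi / ((l : ℝ) + 2))) * Real.sin (Real.pi / ((l : ℝ) + 2)) = 0 := by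
  set θ : ℝ := Real.pi / ((l : ℝ) + 2) with hθ
  have hl2 : ((l : ℝ) + 2) ≠ 0 := by positivity
  apply Finset.sum_involution (fun u _ => 2 * l + 2 - u)
  · intro u hu
    simp only [Finset.mem_filter, Finset.mem_range, abs_le] at hu
    have hub : u ≤ 2 * l + 2 := by omega
    have harg : (((2 * l + 2 - u : ℕ) : ℝ) + 1) * θ = 2 * Real.pi - ((u : ℝ) + 1) * θ := by
      rw [hθ, Nat.cast_sub hub]
      push_cast
      field_simp
      ring
    rw [harg, Real.sin_sub, Real.sin_two_pi, Real.cos_two_pi]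
    ring
  · intro u hu hf
    simp only [Finset.mem_filter, Finset.mem_range, abs_le] at hu
    intro heq
    apply hf
    have : u = l + 1 := by omega
    subst this
    have : ((((l + 1 : ℕ)) : ℝ) + 1) * θ = Real.pi := by
      rw [hθ]; field_simp; push_cast; ring
    rw [this, Real.sin_pi]
    ring
  · intro u hu
    simp only [Finset.mem_filter, Finset.mem_range, abs_le] at hu ⊢
    omega
  · intro u hu
    simp only [Finset.mem_filter, Finset.mem_range, abs_le] at hu
    omega

private lemma one' (l a a' : ℕ) (ha : a ≤ l) (ha' : a' ≤ l) (h : a' ≤ a) :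
    qdim (a + 1) ((l : ℝ) + 2) * qdim (a' + 1) ((l : ℝ) + 2) =
    ∑ u ∈ (Finset.range (a + a' + 1)).filter
        (fun u : ℕ => |(a : ℤ) - (a' : ℤ)| ≤ (u : ℤ) ∧ (a + a' + u) % 2 = 0 ∧ a + a' + u ≤ 2 * l),
      qdim (u + 1) ((l : ℝ) + 2) := by
  have hl2 : (0 : ℝ) < (l : ℝ) + 2 := by positivity
  set θ : ℝ := Real.pi / ((l : ℝ) + 2) with hθ
  have hsθ : 0 < Real.sin θ := by
    apply Real.sin_pos_of_pos_of_lt_pi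
    · rw [hθ]; positivity
    · rw [hθ]
      apply div_lt_self Real.pi_pos
      have : (0 : ℝ) ≤ (l : ℝ) := Nat.cast_nonneg l
      linarith
  have key : ∑ u ∈ (Finset.range (a + a' + 1)).filter
        (fun u : ℕ => |(a : ℤ) - (a' : ℤ)| ≤ (u : ℤ) ∧ (a + a' + u) % 2 = 0 ∧ a + a' + u ≤ 2 * l),
      2 * Real.sin (((u : ℝ) + 1) * θ) * Real.sin θ =
      2 * Real.sin (((a : ℝ) + 1) * θ) * Real.sin (((a' : ℝ) + 1) * θ) := by
    have hsplit : (Finset.range (a + a' + 1)).filter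
        (fun u : ℕ => |(a : ℤ) - (a' : ℤ)| ≤ (u : ℤ) ∧ (a + a' + u) % 2 = 0 ∧ a + a' + u ≤ 2 * l) =
        ((Finset.range (a + a' + 1)).filter
          (fun u : ℕ => |(a : ℤ) - (a' : ℤ)| ≤ (u : ℤ) ∧ (a + a' + u) % 2 = 0)).filter
          (fun u => a + a' + u ≤ 2 * l) := by
      rw [Finset.filter_filter]
      ext u
      simp only [Finset.mem_filter, Finset.mem_range]
      tauto
    rw [hsplit]
    have h1 := Finset.sum_filter_add_sum_filter_not ((Finset.range (a + a' + 1)).filter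
          (fun u : ℕ => |(a : ℤ) - (a' : ℤ)| ≤ (u : ℤ) ∧ (a + a' + u) % 2 = 0))
        (fun u => a + a' + u ≤ 2 * l)
        (fun u : ℕ => 2 * Real.sin (((u : ℝ) + 1) * θ) * Real.sin θ)
    have h2 := dropped l a a' ha ha'
    rw [← hθ] at h2
    have h3 := sumUn a a' h θ
    linarith
  have hq : ∀ u : ℕ, qdim (u + 1) ((l : ℝ) + 2) = Real.sin (((u : ℝ) + 1) * θ) / Real.sin θ := by
    intro u
    unfold qdim
    rw [hθ]
    congr 2
    push_cast
    ring
  rw [hq, hq, Finset.sum_congr rfl (fun u _ => hq u), ← Finset.sum_div, div_mul_div_comm,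
    div_eq_div_iff (by positivity) hsθ.ne']
  have expand : (∑ u ∈ (Finset.range (a + a' + 1)).filter
        (fun u : ℕ => |(a : ℤ) - (a' : ℤ)| ≤ (u : ℤ) ∧ (a + a' + u) % 2 = 0 ∧ a + a' + u ≤ 2 * l),
      Real.sin (((u : ℝ) + 1) * θ)) * (2 * Real.sin θ) =
      ∑ u ∈ (Finset.range (a + a' + 1)).filter
        (fun u : ℕ => |(a : ℤ) - (a' : ℤ)| ≤ (u : ℤ) ∧ (a + a' + u) % 2 = 0 ∧ a + a' + u ≤ 2 * l),
      2 * Real.sin (((u : ℝ) + 1) * θ) * Real.sin θ := by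
    rw [Finset.sum_mul]
    exact Finset.sum_congr rfl fun u _ => by ring
  linear_combination (-(Real.sin θ) / 2) * expand + (-(Real.sin θ) / 2) * key

private lemma one (l a a' : ℕ) (ha : a ≤ l) (ha' : a' ≤ l) :
    qdim (a + 1) ((l : ℝ) + 2) * qdim (a' + 1) ((l : ℝ) + 2) =
    ∑ u ∈ (Finset.range (a + a' + 1)).filter
        (fun u : ℕ => |(a : ℤ) - (a' : ℤ)| ≤ (u : ℤ) ∧ (a + a' + u) % 2 = 0 ∧ a + a' + u ≤ 2 * l),
      qdim (u + 1) ((l : ℝ) + 2) := by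
  rcases le_total a' a with h | h
  · exact one' l a a' ha ha' h
  · rw [mul_comm, one' l a' a ha' ha h]
    apply Finset.sum_congr _ fun _ _ => rfl
    ext u
    simp only [Finset.mem_filter, Finset.mem_range, abs_le]
    omega

/-- For the Neveu-Schwarz discrete series `H_{ij}^ℓ` (charge `c_m`,
`m = ℓ+2`), the quantum dimension
`d(H_{ij}^ℓ) = (sin(pπ/m)/sin(π/m))·(sin(qπ/(m+2))/sin(π/(m+2)))`, `p = 2i+1`,
`q = 2j+1`, is multiplicative for the fusion rules:
`d(H_{ij}^ℓ)·d(H_{i'j'}^ℓ) = Σ_{(i'',j'') ∈ ⟨i,i'⟩_ℓ × ⟨j,j'⟩_{ℓ+2}} d(H_{i''j''}^ℓ)`.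
Half-integer spins are encoded by their doubles: `a = 2i`, `a' = 2i'`, `u = 2i''`
(with `a, a', u ≤ ℓ`) and `b = 2j`, `b' = 2j'`, `v = 2j''` (with `b, b', v ≤ ℓ+2`). -/
theorem neveu_schwarz_quantum_dimension_multiplicative
    (l : ℕ) (hl : 1 ≤ l) (a a' b b' : ℕ)
    (ha : a ≤ l) (ha' : a' ≤ l) (hb : b ≤ l + 2) (hb' : b' ≤ l + 2) :
    (qdim (a + 1) ((l : ℝ) + 2) * qdim (b + 1) ((l : ℝ) + 4)) *
      (qdim (a' + 1) ((l : ℝ) + 2) * qdim (b' + 1) ((l : ℝ) + 4)) =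
    ∑ p ∈ ((Finset.range (a + a' + 1)) ×ˢ (Finset.range (b + b' + 1))).filter
        (fun p =>
          (|(a : ℤ) - (a' : ℤ)| ≤ (p.1 : ℤ) ∧ (a + a' + p.1) % 2 = 0 ∧
            a + a' + p.1 ≤ 2 * l) ∧
          (|(b : ℤ) - (b' : ℤ)| ≤ (p.2 : ℤ) ∧ (b + b' + p.2) % 2 = 0 ∧
            b + b' + p.2 ≤ 2 * (l + 2))),
      qdim (p.1 + 1) ((l : ℝ) + 2) * qdim (p.2 + 1) ((l : ℝ) + 4) := by
  have hcast : ((l : ℝ) + 4) = (((l + 2 : ℕ)) : ℝ) + 2 := by push_cast; ring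
  simp only [hcast]
  have hsplit : ((Finset.range (a + a' + 1)) ×ˢ (Finset.range (b + b' + 1))).filter
        (fun p =>
          (|(a : ℤ) - (a' : ℤ)| ≤ (p.1 : ℤ) ∧ (a + a' + p.1) % 2 = 0 ∧
            a + a' + p.1 ≤ 2 * l) ∧
          (|(b : ℤ) - (b' : ℤ)| ≤ (p.2 : ℤ) ∧ (b + b' + p.2) % 2 = 0 ∧
            b + b' + p.2 ≤ 2 * (l + 2))) =
      ((Finset.range (a + a' + 1)).filter
        (fun u : ℕ => |(a : ℤ) - (a' : ℤ)| ≤ (u : ℤ) ∧ (a + a' + u) % 2 = 0 ∧ a + a' + u ≤ 2 * l)) ×ˢ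
      ((Finset.range (b + b' + 1)).filter
        (fun u : ℕ => |(b : ℤ) - (b' : ℤ)| ≤ (u : ℤ) ∧ (b + b' + u) % 2 = 0 ∧ b + b' + u ≤ 2 * (l + 2))) := by
    ext x
    simp only [Finset.mem_filter, Finset.mem_product]
    tauto
  rw [hsplit, Finset.sum_product'
      (f := fun u v : ℕ => qdim (u + 1) ((l : ℝ) + 2) * qdim (v + 1) ((((l + 2 : ℕ)) : ℝ) + 2)),
    ← Finset.sum_mul_sum,
    ← one l a a' ha ha', ← one (l + 2) b b' hb hb']
  ring
end
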